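/- Let v be an additive valuation, let Z_i ⊆ X_i be bundles for agents i and j with i ≠ j, and define X̂_i = (X_i \ Z_i) ∪ (X_j \ Z_j). If v(X̂_i) ≤ α·v(X_i), then for every item x ∈ X_j \ Z_j, v(x) ≤ α·v(Z_i). -/
import Mathlib

open Finset

/-- Lemma (trick): for an additive valuation `v`, disjoint bundles `Xi, Xj`,
sub-bundles `Zi ⊆ Xi`, `Zj ⊆ Xj`, if `v((Xi \ Zi) ∪ (Xj \ Zj)) ≤ α·v(Xi)`, then
every item `x ∈ Xj \ Zj` satisfies `v({x}) ≤ α·v(Zi)`. -/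
theorem stmt_2 {ι : Type*} [DecidableEq ι]
    (v : Finset ι → ℝ) (hadd : ∀ S : Finset ι, v S = ∑ g ∈ S, v {g})
    (hnn : ∀ g : ι, 0 ≤ v {g})
    (α : ℝ) (hα0 : 0 ≤ α) (hα1 : α ≤ 1)
    (Xi Xj Zi Zj : Finset ι)
    (hdisj : Disjoint Xi Xj) (hZi : Zi ⊆ Xi) (hZj : Zj ⊆ Xj)
    (hXpos : 0 < v Xi)
    (hhat : v ((Xi \ Zi) ∪ (Xj \ Zj)) ≤ α * v Xi) :
    ∀ x ∈ Xj \ Zj, v {x} ≤ α * v Zi := by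
  intro x hx
  have hd : Disjoint (Xi \ Zi) (Xj \ Zj) :=
    (hdisj.mono (sdiff_subset) (sdiff_subset))
  have hsplit : v ((Xi \ Zi) ∪ (Xj \ Zj)) = v (Xi \ Zi) + v (Xj \ Zj) := by
    rw [hadd, hadd, hadd, Finset.sum_union hd]
  have hXi : v Xi = v Zi + v (Xi \ Zi) := by
    rw [hadd, hadd, hadd, ← Finset.sum_union (Finset.disjoint_sdiff),
      Finset.union_sdiff_of_subset hZi]
  have hxle : v {x} ≤ v (Xj \ Zj) := by
    rw [hadd (Xj \ Zj)]
    exact Finset.single_le_sum (fun g _ => hnn g) hx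
  have hA : 0 ≤ v (Xi \ Zi) := by
    rw [hadd]; exact Finset.sum_nonneg fun g _ => hnn g
  nlinarith [hhat, hsplit, hXi, hxle, hA]
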